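/- Let u, v be coprime integers with v ≠ 0 and let r = u/v satisfy |r| > 1. Let m ≥ 1 be an integer, let n ≥ 0, and let a₀, a₁, …, a_n, b₀, b₁, …, b_n be integers with |a_i| ≤ m−1 and |b_i| ≤ m−1 for all i. Suppose ∑_{i=0}^{n} a_i r^i = ∑_{i=0}^{n} b_i r^i. Then there exist rational numbers α₀, α₁, …, α_{n+1}, each of which is an integer, such that α₀ = 0, α_{n+1} = 0, r·α_{i+1} = α_i + a_i − b_i for all i = 0, …, n, and |α_i| ≤ (2m−2)/(|r|−1) for all i = 0, …, n+1. -/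

import Mathlib

/-- let `r = u/v` with `u, v` coprime integers, `v ≠ 0`, `|r| > 1`, let
`m ≥ 1`, and let `a_0, …, a_n, b_0, …, b_n` be integers of absolute value at most `m - 1`
with `∑ a_i r^i = ∑ b_i r^i`. Then there is a sequence of carries `α_0, …, α_{n+1}`,
each an integer, with `α_0 = α_{n+1} = 0`, `r·α_{i+1} = α_i + a_i − b_i` for all
`i = 0, …, n`, and `|α_i| ≤ (2m−2)/(|r|−1)` for all `i`. -/
theorem carry_sequence_exists (u v : ℤ) (hv : v ≠ 0) (huv : IsCoprime u v) (r : ℚ)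
    (hr : r = (u : ℚ) / (v : ℚ)) (hr1 : 1 < |r|) (m : ℕ) (hm : 1 ≤ m) (n : ℕ)
    (a b : Fin (n + 1) → ℤ)
    (ha : ∀ i, |a i| ≤ (m : ℤ) - 1) (hb : ∀ i, |b i| ≤ (m : ℤ) - 1)
    (hsum : ∑ i : Fin (n + 1), (a i : ℚ) * r ^ (i : ℕ) =
      ∑ i : Fin (n + 1), (b i : ℚ) * r ^ (i : ℕ)) :
    ∃ α : Fin (n + 2) → ℚ,
      (∀ i, ∃ z : ℤ, α i = (z : ℚ)) ∧
      α 0 = 0 ∧ α (Fin.last (n + 1)) = 0 ∧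
      (∀ i : Fin (n + 1), r * α i.succ = α i.castSucc + (a i : ℚ) - (b i : ℚ)) ∧
      (∀ i, |α i| ≤ (2 * (m : ℚ) - 2) / (|r| - 1)) := by
  have hvQ : (v : ℚ) ≠ 0 := Int.cast_ne_zero.mpr hv
  have hrne : r ≠ 0 := by
    intro h; rw [h, abs_zero] at hr1; norm_num at hr1
  have hu : u ≠ 0 := by
    intro h; rw [h] at hr; simp at hr; exact hrne hr
  have huQ : (u : ℚ) ≠ 0 := Int.cast_ne_zero.mpr hu
  set c : ℕ → ℤ := fun i => if h : i < n + 1 then a ⟨i, h⟩ - b ⟨i, h⟩ else 0 with hc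
  set S : ℕ → ℚ := fun k => ∑ j ∈ Finset.range k, (c j : ℚ) * r ^ j with hS
  have hSdef : ∀ k : ℕ, S k = ∑ j ∈ Finset.range k, (c j : ℚ) * r ^ j := fun _ => rfl
  have hcb : ∀ j, |c j| ≤ 2 * (m : ℤ) - 2 := by
    intro j
    by_cases h : j < n + 1
    · simp only [hc, dif_pos h]
      calc |a ⟨j, h⟩ - b ⟨j, h⟩| ≤ |a ⟨j, h⟩| + |b ⟨j, h⟩| := abs_sub _ _
        _ ≤ 2 * (m : ℤ) - 2 := by have := ha ⟨j, h⟩; have := hb ⟨j, h⟩; omega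
    · simp only [hc, dif_neg h, abs_zero]; omega
  have hS0 : S (n + 1) = 0 := by
    have h1 : S (n + 1) = ∑ i : Fin (n + 1), ((a i : ℚ) * r ^ (i : ℕ) - (b i : ℚ) * r ^ (i : ℕ)) := by
      rw [hSdef (n + 1), Finset.sum_range]
      apply Finset.sum_congr rfl
      intro i _
      simp only [hc, Fin.is_lt, dif_pos, Fin.eta]
      push_cast; ring
    rw [h1, Finset.sum_sub_distrib, hsum, sub_self]
  set α : Fin (n + 2) → ℚ := fun k => S (k : ℕ) / r ^ (k : ℕ) with hα
  have hαdef : ∀ k : Fin (n + 2), α k = S (k : ℕ) / r ^ (k : ℕ) := fun _ => rfl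
  have hrk : ∀ k : ℕ, r ^ k = (u : ℚ) ^ k / (v : ℚ) ^ k := fun k => by rw [hr, div_pow]
  refine ⟨α, ?_, ?_, ?_, ?_, ?_⟩
  · -- integrality
    intro k
    set K := (k : ℕ) with hK
    have hKle : K ≤ n + 1 := Nat.lt_succ_iff.mp k.isLt
    set A : ℤ := ∑ j ∈ Finset.range K, c j * u ^ j * v ^ (K - j) with hAdef
    set B : ℤ := -∑ j ∈ Finset.Ico K (n + 1), c j * u ^ (j - K) * v ^ (n + 1 - j) with hBdef
    have hA : (u : ℚ) ^ K * α k = (A : ℚ) := by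
      have h1 : (u : ℚ) ^ K * α k = S K * (v : ℚ) ^ K := by
        rw [hαdef, hrk K]
        field_simp
        rfl
      rw [h1, hAdef]
      push_cast
      rw [hSdef K, Finset.sum_mul]
      apply Finset.sum_congr rfl
      intro j hj
      have hjK : j ≤ K := le_of_lt (Finset.mem_range.mp hj)
      rw [hr]
      simp only [div_pow]
      rw [show (v : ℚ) ^ K = (v : ℚ) ^ (K - j) * (v : ℚ) ^ j from by
        rw [← pow_add, Nat.sub_add_cancel hjK]]
      field_simp
    have hB : (v : ℚ) ^ (n + 1 - K) * α k = (B : ℚ) := by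
      have hsplit : S K + ∑ j ∈ Finset.Ico K (n + 1), (c j : ℚ) * r ^ j = S (n + 1) := by
        rw [hSdef K, hSdef (n + 1), Finset.range_eq_Ico, Finset.range_eq_Ico]
        exact Finset.sum_Ico_consecutive _ (Nat.zero_le K) hKle
      have hSK : S K = -∑ j ∈ Finset.Ico K (n + 1), (c j : ℚ) * r ^ j := by
        rw [hS0] at hsplit; linarith
      rw [hαdef, hSK, hBdef]
      push_cast
      rw [neg_div, mul_neg, neg_inj, Finset.sum_div, Finset.mul_sum]
      apply Finset.sum_congr rfl
      intro j hj
      obtain ⟨hKj, hjn⟩ := Finset.mem_Ico.mp hj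
      rw [hr]
      simp only [div_pow]
      rw [show (u : ℚ) ^ j = (u : ℚ) ^ (j - K) * (u : ℚ) ^ K from by
            rw [← pow_add, Nat.sub_add_cancel hKj],
          show (v : ℚ) ^ (n + 1 - K) = (v : ℚ) ^ (n + 1 - j) * (v : ℚ) ^ (j - K) from by
            rw [← pow_add]; congr 1; omega,
          show (v : ℚ) ^ j = (v : ℚ) ^ (j - K) * (v : ℚ) ^ K from by
            rw [← pow_add, Nat.sub_add_cancel hKj]]
      field_simp
      ring
    obtain ⟨x, y, hxy⟩ := (huv.pow : IsCoprime (u ^ K) (v ^ (n + 1 - K)))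
    refine ⟨x * A + y * B, ?_⟩
    have hxy' : (x : ℚ) * (u : ℚ) ^ K + (y : ℚ) * (v : ℚ) ^ (n + 1 - K) = 1 := by
      exact_mod_cast hxy
    push_cast
    linear_combination (x : ℚ) * hA + (y : ℚ) * hB - α k * hxy'
  · simp [hαdef, hSdef]
  · rw [hαdef]
    simp only [Fin.val_last]
    rw [hS0, zero_div]
  · intro i
    have h1 : ((i.succ : Fin (n + 2)) : ℕ) = (i : ℕ) + 1 := rfl
    have h2 : ((i.castSucc : Fin (n + 2)) : ℕ) = (i : ℕ) := rfl
    rw [hαdef, hαdef, h1, h2, hSdef ((i : ℕ) + 1), hSdef (i : ℕ), Finset.sum_range_succ]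
    have hci : (c (i : ℕ) : ℚ) = (a i : ℚ) - b i := by
      simp only [hc, Fin.is_lt, dif_pos, Fin.eta]; push_cast; ring
    field_simp
    rw [hci]
    ring
  · -- bound
    intro k
    have hr0 : (0 : ℚ) < |r| - 1 := by linarith
    have hrp : (0 : ℚ) < |r| := by linarith
    have hm' : (1 : ℚ) ≤ m := by exact_mod_cast hm
    have hSb : |S (k : ℕ)| ≤ (2 * (m : ℚ) - 2) * (|r| ^ (k : ℕ) / (|r| - 1)) := by
      rw [hSdef]
      calc |∑ j ∈ Finset.range (k : ℕ), (c j : ℚ) * r ^ j|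
          ≤ ∑ j ∈ Finset.range (k : ℕ), |(c j : ℚ) * r ^ j| :=
            Finset.abs_sum_le_sum_abs _ _
        _ ≤ ∑ j ∈ Finset.range (k : ℕ), (2 * (m : ℚ) - 2) * |r| ^ j := by
            apply Finset.sum_le_sum
            intro j _
            rw [abs_mul, abs_pow]
            apply mul_le_mul_of_nonneg_right _ (pow_nonneg (abs_nonneg r) j)
            have := hcb j
            calc |(c j : ℚ)| = ((|c j| : ℤ) : ℚ) := by push_cast; rfl
              _ ≤ 2 * (m : ℚ) - 2 := by exact_mod_cast this
        _ = (2 * (m : ℚ) - 2) * ∑ j ∈ Finset.range (k : ℕ), |r| ^ j := by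
            rw [Finset.mul_sum]
        _ ≤ (2 * (m : ℚ) - 2) * (|r| ^ (k : ℕ) / (|r| - 1)) := by
            apply mul_le_mul_of_nonneg_left _ (by linarith : (0 : ℚ) ≤ 2 * (m : ℚ) - 2)
            rw [le_div_iff₀ hr0, geom_sum_mul]
            nlinarith [pow_pos hrp (k : ℕ)]
    rw [hαdef, abs_div, abs_pow, div_le_div_iff₀ (pow_pos hrp _) hr0]
    calc |S (k : ℕ)| * (|r| - 1)
        ≤ (2 * (m : ℚ) - 2) * (|r| ^ (k : ℕ) / (|r| - 1)) * (|r| - 1) :=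
          mul_le_mul_of_nonneg_right hSb (le_of_lt hr0)
      _ = (2 * (m : ℚ) - 2) * |r| ^ (k : ℕ) := by field_simp
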